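/- Let M be a finite metric space and G a maximum spanning tree on M with edges ordered so |e₁| ≤ … ≤ |e_{n-1}|. For each k, let {M₁,…,M_{k+1}} be the partition of M into vertex sets of components of G \ {e_{n-k},…,e_{n-1}} (removing the k longest edges). Then diam Mᵢ ≤ |e_{n-k-1}| for every i. -/

import Mathlib

open scoped Classical

/-- The length of a graph on a finite metric space: the sum of the distances between the
endpoints of its edges. -/
noncomputable def graphLength {M : Type*} [MetricSpace M] [Fintype M] (G : SimpleGraph M) : ℝ :=
  ∑ e ∈ G.edgeSet.toFinite.toFinset,
    Sym2.lift ⟨fun x y => dist x y, fun x y => dist_comm x y⟩ e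

/-- The length of an edge: the distance between its endpoints. -/
noncomputable def edgeLen {M : Type*} [MetricSpace M] (e : Sym2 M) : ℝ :=
  Sym2.lift ⟨fun x y => dist x y, fun x y => dist_comm x y⟩ e

/-- The length of the `i`-th edge in a list of edges (1-indexed), with the convention that the
`0`-th edge has length `0`. -/
noncomputable def edgeLenAt {M : Type*} [MetricSpace M] (E : List (Sym2 M)) : ℕ → ℝ
  | 0 => 0
  | i + 1 => (E.map edgeLen).getD i 0


section AuxLemmas
open SimpleGraph


/-- Splitting a path at an edge: both endpoints of the path reach the respective
endpoints of the edge in the graph with that edge deleted. -/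
lemma split_at_edge {V : Type*} {G : SimpleGraph V} {y : V} :
    ∀ {u : V} (p : G.Walk u y), p.IsPath → ∀ {e : Sym2 V}, e ∈ p.edges →
      ∃ c d, e = s(c, d) ∧ (G.deleteEdges {e}).Reachable u c ∧
        (G.deleteEdges {e}).Reachable y d := by
  intro u p
  induction p with
  | nil => simp
  | cons h q ih =>
    rename_i a b _
    intro hp e he
    rw [SimpleGraph.Walk.edges_cons, List.mem_cons] at he
    rcases he with rfl | he
    · refine ⟨a, b, rfl, Reachable.refl _, ?_⟩
      have hq : s(a, b) ∉ q.edges := fun hmem =>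
        ((SimpleGraph.Walk.cons_isPath_iff _ _).mp hp).2
          (SimpleGraph.Walk.fst_mem_support_of_mem_edges q hmem)
      have w' := q.toDeleteEdges {s(a, b)}
        (fun e' he' => by simp only [Set.mem_singleton_iff]; rintro rfl; exact hq he')
      exact ⟨w'.reverse⟩
    · obtain ⟨c, d, rfl, r1, r2⟩ := ih (SimpleGraph.Walk.IsPath.of_cons hp) he
      have hne : s(a, b) ≠ s(c, d) := by
        have hnd := hp.isTrail.edges_nodup
        rw [SimpleGraph.Walk.edges_cons, List.nodup_cons] at hnd
        exact fun hh => hnd.1 (hh ▸ he)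
      have hadj : (G.deleteEdges {s(c, d)}).Adj a b := by
        rw [SimpleGraph.deleteEdges_adj]; exact ⟨h, hne⟩
      exact ⟨c, d, rfl, hadj.reachable.trans r1, r2⟩

/-- In a tree, deleting an edge of the (unique) path between `x` and `y` separates them. -/
lemma tree_sep {V : Type*} {G : SimpleGraph V} (hG : G.IsTree) {x y : V}
    {p : G.Walk x y} (hp : p.IsPath) {e : Sym2 V} (he : e ∈ p.edges) :
    ¬ (G.deleteEdges {e}).Reachable x y := by
  rintro ⟨w⟩
  classical
  have htr : ∀ f ∈ w.toPath.1.edges, f ∈ G.edgeSet := fun f hf => by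
    have := SimpleGraph.Walk.edges_subset_edgeSet _ hf
    rw [edgeSet_deleteEdges] at this
    exact this.1
  have htr0 : ∀ f ∈ w.toPath.1.edges, f ∉ ({e} : Set (Sym2 V)) := fun f hf => by
    have := SimpleGraph.Walk.edges_subset_edgeSet _ hf
    rw [edgeSet_deleteEdges] at this
    exact this.2
  set q := w.toPath.1.transfer G htr with hqdef
  have hq : q.IsPath := w.toPath.2.transfer htr
  have := (hG.existsUnique_path x y).unique hq hp
  have heq : e ∈ q.edges := this ▸ he
  rw [hqdef, SimpleGraph.Walk.edges_transfer] at heq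
  exact htr0 e heq rfl

/-- The exchanged graph is a tree. -/
lemma exchange_isTree {V : Type*} {G : SimpleGraph V} (hG : G.IsTree) {x y : V} (hxy : x ≠ y)
    {p : G.Walk x y} (hp : p.IsPath) {e : Sym2 V} (he : e ∈ p.edges) :
    (G.deleteEdges {e} ⊔ fromEdgeSet {s(x, y)}).IsTree := by
  set T := G.deleteEdges {e} ⊔ fromEdgeSet {s(x, y)} with hT
  have hle : G.deleteEdges {e} ≤ T := le_sup_left
  have hxyT : T.Adj x y := Or.inr (by simp [fromEdgeSet_adj, hxy])
  have hsep := tree_sep hG hp he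
  have hab : ∀ c d, s(c, d) = e → T.Reachable c d := by
    intro c d hcd
    obtain ⟨c', d', he', r1, r2⟩ := split_at_edge p hp he
    have r1' : T.Reachable x c' := r1.mono hle
    have r2' : T.Reachable y d' := r2.mono hle
    have rmain : T.Reachable c' d' := (r1'.symm.trans hxyT.reachable).trans r2'
    rw [he'] at hcd
    rw [Sym2.eq_iff] at hcd
    rcases hcd with ⟨rfl, rfl⟩ | ⟨rfl, rfl⟩
    · exact rmain
    · exact rmain.symm
  have hstep : ∀ u v : V, G.Adj u v → T.Reachable u v := by
    intro u v huv
    by_cases hce : s(u, v) = e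
    · exact hab u v hce
    · have : (G.deleteEdges {e}).Adj u v := by
        rw [SimpleGraph.deleteEdges_adj]; exact ⟨huv, hce⟩
      exact (SimpleGraph.Adj.reachable (Or.inl this : T.Adj u v))
  have hconn : T.Connected := by
    rw [connected_iff]
    refine ⟨fun u v => ?_, hG.isConnected.nonempty⟩
    obtain ⟨w⟩ := hG.isConnected.preconnected u v
    clear hxyT
    induction w with
    | nil => exact Reachable.refl _
    | cons h q ih => exact (hstep _ _ h).trans ih
  refine ⟨hconn, ?_⟩
  intro v c hc
  by_cases hin : s(x, y) ∈ c.edges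
  · have hkey := (adj_and_reachable_delete_edges_iff_exists_cycle (G := T)).mpr ⟨v, c, hc, hin⟩
    have hle2 : (T \ fromEdgeSet {s(x, y)}) ≤ G.deleteEdges {e} := by
      intro u u' huu'
      obtain ⟨hT', hnot⟩ := huu'
      rcases hT' with h1 | h2
      · exact h1
      · exact absurd h2 hnot
    exact hsep (hkey.2.mono hle2)
  · have hsub : ∀ f ∈ c.edges, f ∈ G.edgeSet := by
      intro f hf
      have hfT := SimpleGraph.Walk.edges_subset_edgeSet c hf
      rw [hT, edgeSet_sup, edgeSet_deleteEdges, edgeSet_fromEdgeSet] at hfT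
      rcases hfT with h1 | h2
      · exact h1.1
      · exact absurd h2.1 (fun hh => hin (hh ▸ hf))
    exact hG.IsAcyclic (c.transfer G hsub) (hc.transfer hsub)


lemma edgeLen_nonneg {M : Type*} [MetricSpace M] (e : Sym2 M) : 0 ≤ edgeLen e := by
  induction e using Sym2.ind with
  | _ a b => simp only [edgeLen, Sym2.lift_mk]; exact dist_nonneg

lemma exchange_le {M : Type*} [MetricSpace M] [Fintype M] {G : SimpleGraph M}
    (hG : G.IsTree) (hmax : ∀ T : SimpleGraph M, T.IsTree → graphLength T ≤ graphLength G)
    {x y : M} (hxy : x ≠ y) {p : G.Walk x y} (hp : p.IsPath)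
    {e : Sym2 M} (he : e ∈ p.edges) : dist x y ≤ edgeLen e := by
  by_cases hexy : e = s(x, y)
  · subst hexy; simp [edgeLen]
  have hnotG : s(x, y) ∉ G.edgeSet := by
    intro h
    have hadj : G.Adj x y := h
    have hone : (SimpleGraph.Walk.cons hadj SimpleGraph.Walk.nil).IsPath := by
      simp [hxy]
    have := (hG.existsUnique_path x y).unique hp hone
    rw [this] at he
    simp at he
    exact hexy he
  set T := G.deleteEdges {e} ⊔ fromEdgeSet {s(x, y)} with hTdef
  have hT : T.IsTree := exchange_isTree hG hxy hp he
  have heG : e ∈ G.edgeSet := p.edges_subset_edgeSet he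
  have hTset : T.edgeSet = (G.edgeSet \ {e}) ∪ {s(x, y)} := by
    rw [hTdef, edgeSet_sup, edgeSet_deleteEdges, edgeSet_fromEdgeSet]
    ext f
    simp only [Set.mem_union, Set.mem_diff, Set.mem_singleton_iff, Set.mem_setOf_eq]
    constructor
    · rintro (h | h)
      · exact Or.inl h
      · exact Or.inr h.1
    · rintro (h | rfl)
      · exact Or.inl h
      · exact Or.inr ⟨rfl, by simp [Sym2.mk_isDiag_iff, hxy]⟩
  have hA : e ∈ G.edgeSet.toFinite.toFinset := by
    rw [Set.Finite.mem_toFinset]; exact heG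
  have hBA : T.edgeSet.toFinite.toFinset =
      insert s(x, y) ((G.edgeSet.toFinite.toFinset).erase e) := by
    ext f
    simp only [Set.Finite.mem_toFinset, hTset, Finset.mem_insert, Finset.mem_erase,
      Set.mem_union, Set.mem_diff, Set.mem_singleton_iff, Set.Finite.mem_toFinset]
    tauto
  have hnotmem : s(x, y) ∉ (G.edgeSet.toFinite.toFinset).erase e := by
    rw [Finset.mem_erase, Set.Finite.mem_toFinset]
    exact fun h => hnotG h.2
  have hlen : graphLength T = edgeLen s(x, y) +
      (graphLength G - edgeLen e) := by
    rw [graphLength, hBA, Finset.sum_insert hnotmem, graphLength,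
      Finset.sum_erase_eq_sub hA]
    rfl
  have hmaxT := hmax T hT
  rw [hlen] at hmaxT
  have hxyd : edgeLen s(x, y) = dist x y := by simp [edgeLen]
  rw [hxyd] at hmaxT
  linarith


lemma edgeLenAt_nonneg {M : Type*} [MetricSpace M] (E : List (Sym2 M)) (n : ℕ) :
    0 ≤ edgeLenAt E n := by
  cases n with
  | zero => exact le_refl 0
  | succ i =>
    show 0 ≤ (E.map edgeLen).getD i 0
    by_cases h : i < (E.map edgeLen).length
    · rw [List.getD_eq_getElem _ _ h]
      rw [List.length_map] at h
      rw [List.getElem_map]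
      exact edgeLen_nonneg _
    · rw [List.getD_eq_default _ _ (not_lt.mp h)]

theorem stmt_18 {M : Type*} [MetricSpace M] [Fintype M] (hn : 2 ≤ Fintype.card M)
    (G : SimpleGraph M) (hG : G.IsTree)
    (hmax : ∀ T : SimpleGraph M, T.IsTree → graphLength T ≤ graphLength G)
    (E : List (Sym2 M)) (hE : ∀ e, e ∈ E ↔ e ∈ G.edgeSet) (hnd : E.Nodup)
    (hsorted : (E.map edgeLen).Pairwise (· ≤ ·))
    {k : ℕ} (hk1 : 1 ≤ k) (hk2 : k ≤ E.length)
    (x y : M) (hxy : (G.deleteEdges {e | e ∈ E.drop (E.length - k)}).Reachable x y) :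
    dist x y ≤ edgeLenAt E (E.length - k) := by
  rcases eq_or_ne x y with rfl | hne
  · simpa [_root_.dist_self] using edgeLenAt_nonneg E (E.length - k)
  obtain ⟨w⟩ := hxy
  have htr : ∀ f ∈ w.toPath.1.edges, f ∈ G.edgeSet := fun f hf => by
    have := SimpleGraph.Walk.edges_subset_edgeSet _ hf
    rw [edgeSet_deleteEdges] at this
    exact this.1
  set q := w.toPath.1.transfer G htr with hqdef
  have hq : q.IsPath := w.toPath.2.transfer htr
  have hqe : q.edges = w.toPath.1.edges := SimpleGraph.Walk.edges_transfer _ _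
  have hqne : q.edges ≠ [] := by
    cases hq2 : q with
    | nil => exact absurd rfl hne
    | cons h p => simp
  obtain ⟨e', he'⟩ := List.exists_mem_of_ne_nil _ hqne
  have hbound : dist x y ≤ edgeLen e' := exchange_le hG hmax hne hq he'
  -- e' is an edge of the deleted graph, so it lies in E.take (E.length - k)
  have he'G : e' ∈ (G.deleteEdges {e | e ∈ E.drop (E.length - k)}).edgeSet := by
    rw [hqe] at he'
    exact SimpleGraph.Walk.edges_subset_edgeSet _ he'
  rw [edgeSet_deleteEdges] at he'G
  have he'E : e' ∈ E := (hE e').mpr he'G.1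
  have he'drop : e' ∉ E.drop (E.length - k) := he'G.2
  have he'take : e' ∈ E.take (E.length - k) := by
    have := List.take_append_drop (E.length - k) E
    rw [← this, List.mem_append] at he'E
    tauto
  -- get the index
  obtain ⟨i, hi, hie⟩ := List.getElem_of_mem he'take
  rw [List.length_take] at hi
  have him : i < E.length - k := lt_of_lt_of_le hi (min_le_left _ _)
  have hiE : i < E.length := lt_of_lt_of_le hi (min_le_right _ _)
  rw [List.getElem_take] at hie
  cases hm : E.length - k with
  | zero => rw [hm] at him; exact absurd him (Nat.not_lt_zero i)
  | succ j =>
    rw [hm] at him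
    have hjE : j < E.length := by omega
    show dist x y ≤ (E.map edgeLen).getD j 0
    rw [List.getD_eq_getElem _ _ (by simpa using hjE)]
    have hval : (E.map edgeLen)[i]'(by simpa using hiE) = edgeLen e' := by
      rw [List.getElem_map]; rw [hie]
    rcases Nat.lt_or_ge i j with hij | hij
    · have := List.pairwise_iff_getElem.mp hsorted i j (by simpa using hiE)
        (by simpa using hjE) hij
      rw [hval] at this
      exact hbound.trans this
    · have : i = j := by omega
      subst this
      rw [hval]
      exact hbound

end AuxLemmas
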